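/- Let n ≥ 1, 2 < p < ∞, α = (p−2)/(p+n), β = (n+2)/(p+n), and ε > 0. If u : ℝⁿ → ℝ is bounded and lower semicontinuous, then the function x ↦ β · ⨍_{B_ε(x)} u(y) dy + α · sup_{|σ|=1} [u(x+εσ) + u(x−εσ)]/2 is bounded and lower semicontinuous on ℝⁿ. -/

import Mathlib

open MeasureTheory Metric Set
open Filter Topology

section Aux

variable {α : Type*} [TopologicalSpace α]

lemma aux_lsc_const_mul {c : ℝ} (hc : 0 ≤ c) {f : α → ℝ} (hf : LowerSemicontinuous f) :
    LowerSemicontinuous fun x => c * f x := by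
  rcases hc.eq_or_lt with rfl | hc
  · simp only [zero_mul]
    exact lowerSemicontinuous_const
  · intro x y hy
    have h1 : y / c < f x := (div_lt_iff₀' hc).mpr hy
    filter_upwards [hf x _ h1] with z hz
    exact (div_lt_iff₀' hc).mp hz

lemma aux_lsc_comp {β : Type*} [TopologicalSpace β] {f : β → ℝ}
    (hf : LowerSemicontinuous f) {g : α → β} (hg : Continuous g) :
    LowerSemicontinuous fun x => f (g x) := fun x y hy =>
  hg.continuousAt.eventually (hf (g x) y hy)

end Aux

section Cont

variable {n : ℕ}

local notation "E" => EuclideanSpace ℝ (Fin n)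

lemma aux_integrableOn {u : E → ℝ} {M : ℝ} (hM : ∀ x, abs (u x) ≤ M) (hmeas : Measurable u)
    {s : Set E} (hs : volume s < ⊤) : IntegrableOn u s := by
  haveI : Fact (volume s < ⊤) := ⟨hs⟩
  exact ⟨hmeas.aestronglyMeasurable,
    HasFiniteIntegral.of_bounded (C := M) (Eventually.of_forall fun x => by
      simpa [Real.norm_eq_abs] using hM x)⟩

lemma aux_setint_bound {u : E → ℝ} {M : ℝ} (hM : ∀ x, abs (u x) ≤ M) (hmeas : Measurable u)
    {s : Set E} (hs : volume s < ⊤) : |∫ y in s, u y| ≤ M * (volume s).toReal := by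
  simpa [Real.norm_eq_abs, measureReal_def] using
    norm_setIntegral_le_of_norm_le_const (f := u) hs
      (fun x _ => by simpa [Real.norm_eq_abs] using hM x)

lemma aux_ball_integral_continuous (hn : 1 ≤ n) {ε : ℝ} (hε : 0 < ε)
    {u : E → ℝ} {M : ℝ} (hM : ∀ x, abs (u x) ≤ M) (hmeas : Measurable u) :
    Continuous (fun x : E => ∫ y in ball x ε, u y) := by
  haveI : Nonempty (Fin n) := Fin.pos_iff_nonempty.mp hn
  have hM0 : 0 ≤ M := (abs_nonneg _).trans (hM 0)
  set c : ℝ → ℝ := fun r => (volume (ball (0:E) r)).toReal with hc_def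
  -- diff measure bound
  have hdiff : ∀ x z : E, (volume (ball z ε \ ball x ε)).toReal ≤ c ε - c (ε - dist z x) := by
    intro x z
    have h1 : ball z (ε - dist z x) ⊆ ball x ε := fun y hy => by
      rw [mem_ball] at hy ⊢
      calc dist y x ≤ dist y z + dist z x := dist_triangle _ _ _
        _ < (ε - dist z x) + dist z x := by linarith
        _ = ε := by ring
    have h2 : ball z ε \ ball x ε ⊆ ball z ε \ ball z (ε - dist z x) :=
      diff_subset_diff_right h1
    have h3 : volume (ball z ε \ ball z (ε - dist z x)) =
        volume (ball z ε) - volume (ball z (ε - dist z x)) :=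
      measure_diff (ball_subset_ball (by linarith [dist_nonneg (x := z) (y := x)]))
        measurableSet_ball.nullMeasurableSet measure_ball_lt_top.ne
    calc (volume (ball z ε \ ball x ε)).toReal
        ≤ (volume (ball z ε \ ball z (ε - dist z x))).toReal := by
          apply ENNReal.toReal_mono
          · exact ((measure_mono diff_subset).trans_lt measure_ball_lt_top).ne
          · exact measure_mono h2
      _ = c ε - c (ε - dist z x) := by
          rw [h3, ENNReal.toReal_sub_of_le
            (measure_mono (ball_subset_ball (by linarith [dist_nonneg (x := z) (y := x)])))
            measure_ball_lt_top.ne, hc_def]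
          simp only [Measure.addHaar_ball_center]
  have key : ∀ x z : E, |(∫ y in ball z ε, u y) - ∫ y in ball x ε, u y| ≤
      2 * M * (c ε - c (ε - dist z x)) := by
    intro x z
    have e1 : (∫ y in ball z ε ∩ ball x ε, u y) + ∫ y in ball z ε \ ball x ε, u y
        = ∫ y in ball z ε, u y :=
      integral_inter_add_diff measurableSet_ball (aux_integrableOn hM hmeas measure_ball_lt_top)
    have e2 : (∫ y in ball x ε ∩ ball z ε, u y) + ∫ y in ball x ε \ ball z ε, u y
        = ∫ y in ball x ε, u y :=
      integral_inter_add_diff measurableSet_ball (aux_integrableOn hM hmeas measure_ball_lt_top)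
    have e3 : (∫ y in ball z ε, u y) - ∫ y in ball x ε, u y
        = (∫ y in ball z ε \ ball x ε, u y) - ∫ y in ball x ε \ ball z ε, u y := by
      rw [← e1, ← e2, inter_comm]; ring
    have b1 := aux_setint_bound hM hmeas
      ((measure_mono (diff_subset (s := ball z ε) (t := ball x ε))).trans_lt measure_ball_lt_top)
    have b2 := aux_setint_bound hM hmeas
      ((measure_mono (diff_subset (s := ball x ε) (t := ball z ε))).trans_lt measure_ball_lt_top)
    have d1 := hdiff x z
    have d2 := hdiff z x
    rw [dist_comm x z] at d2
    calc |(∫ y in ball z ε, u y) - ∫ y in ball x ε, u y|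
        ≤ |∫ y in ball z ε \ ball x ε, u y| + |∫ y in ball x ε \ ball z ε, u y| := by
          rw [e3]; exact abs_sub _ _
      _ ≤ M * (volume (ball z ε \ ball x ε)).toReal
          + M * (volume (ball x ε \ ball z ε)).toReal := add_le_add b1 b2
      _ ≤ M * (c ε - c (ε - dist z x)) + M * (c ε - c (ε - dist z x)) := by
          gcongr
      _ = 2 * M * (c ε - c (ε - dist z x)) := by ring
  -- continuity of c at ε
  have hc_cont : ContinuousAt c ε := by
    have heq : ∀ᶠ r in 𝓝 ε, (fun r : ℝ => r ^ n * c 1) r = c r := by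
      filter_upwards [eventually_gt_nhds hε] with r hr
      rw [hc_def]
      simp only
      rw [Measure.addHaar_ball_of_pos volume (0:E) hr, ENNReal.toReal_mul,
        ENNReal.toReal_ofReal (by positivity), finrank_euclideanSpace_fin]
    exact ((continuous_pow n).mul continuous_const).continuousAt.congr heq
  rw [continuous_iff_continuousAt]
  intro x
  rw [ContinuousAt, tendsto_iff_dist_tendsto_zero]
  have htend : Tendsto (fun z : E => 2 * M * (c ε - c (ε - dist z x))) (𝓝 x) (𝓝 0) := by
    have : Tendsto (fun z : E => ε - dist z x) (𝓝 x) (𝓝 ε) := by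
      have h0 : Tendsto (fun z : E => dist z x) (𝓝 x) (𝓝 (dist x x)) :=
        (Continuous.dist continuous_id continuous_const).tendsto x
      have : Tendsto (fun z : E => dist z x) (𝓝 x) (𝓝 0) := by simpa using h0
      simpa using (tendsto_const_nhds (x := ε)).sub this
    have h2 : Tendsto (fun z : E => c (ε - dist z x)) (𝓝 x) (𝓝 (c ε)) := hc_cont.tendsto.comp this
    have := ((tendsto_const_nhds (x := c ε)).sub h2).const_mul (2 * M)
    simpa using this
  refine squeeze_zero (fun z => dist_nonneg) (fun z => ?_) htend
  rw [Real.dist_eq]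
  exact key x z

end Cont

/-- If `u` is bounded and lower semicontinuous, then so is
`x ↦ β ⨍_{B_ε(x)} u + α sup_{|σ|=1} (u(x+εσ)+u(x−εσ))/2`, where
`α = (p−2)/(p+n)` and `β = (n+2)/(p+n)`. -/
theorem dpp_operator_preserves_bounded_lsc
    (n : ℕ) (hn : 1 ≤ n) (p : ℝ) (hp : 2 < p) (ε : ℝ) (hε : 0 < ε)
    (u : EuclideanSpace ℝ (Fin n) → ℝ)
    (hbd : ∃ M : ℝ, ∀ x, |u x| ≤ M) (hlsc : LowerSemicontinuous u) :
    (∃ M : ℝ, ∀ x,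
      |(((n : ℝ) + 2) / (p + n)) * (⨍ y in ball x ε, u y) +
        ((p - 2) / (p + n)) *
          (⨆ σ : sphere (0 : EuclideanSpace ℝ (Fin n)) 1,
            (u (x + ε • (σ : EuclideanSpace ℝ (Fin n))) +
             u (x - ε • (σ : EuclideanSpace ℝ (Fin n)))) / 2)| ≤ M) ∧
    LowerSemicontinuous (fun x : EuclideanSpace ℝ (Fin n) =>
      (((n : ℝ) + 2) / (p + n)) * (⨍ y in ball x ε, u y) +
        ((p - 2) / (p + n)) *
          (⨆ σ : sphere (0 : EuclideanSpace ℝ (Fin n)) 1,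
            (u (x + ε • (σ : EuclideanSpace ℝ (Fin n))) +
             u (x - ε • (σ : EuclideanSpace ℝ (Fin n)))) / 2)) := by
  classical
  obtain ⟨M, hM⟩ := hbd
  have hM0 : 0 ≤ M := (abs_nonneg _).trans (hM 0)
  have hmeas : Measurable u := hlsc.measurable
  haveI : Nonempty (Fin n) := Fin.pos_iff_nonempty.mp hn
  haveI hsph : Nonempty (sphere (0 : EuclideanSpace ℝ (Fin n)) 1) :=
    (NormedSpace.sphere_nonempty.mpr zero_le_one).coe_sort
  have hn0 : (0:ℝ) ≤ n := Nat.cast_nonneg n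
  have hpn : (0:ℝ) < p + n := by linarith
  have hβ : 0 ≤ ((n:ℝ) + 2) / (p + n) := div_nonneg (by linarith) hpn.le
  have hα : 0 ≤ (p - 2) / (p + n) := div_nonneg (by linarith) hpn.le
  set S : EuclideanSpace ℝ (Fin n) → ℝ := fun x =>
    ⨆ σ : sphere (0 : EuclideanSpace ℝ (Fin n)) 1,
      (u (x + ε • (σ : EuclideanSpace ℝ (Fin n))) +
       u (x - ε • (σ : EuclideanSpace ℝ (Fin n)))) / 2 with hS_def
  have hfb : ∀ (x : EuclideanSpace ℝ (Fin n)) (σ : sphere (0 : EuclideanSpace ℝ (Fin n)) 1),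
      |(u (x + ε • (σ : EuclideanSpace ℝ (Fin n))) +
        u (x - ε • (σ : EuclideanSpace ℝ (Fin n)))) / 2| ≤ M := by
    intro x σ
    rw [abs_div, abs_two]
    rw [div_le_iff₀ (by norm_num : (0:ℝ) < 2)]
    calc |u (x + ε • (σ : EuclideanSpace ℝ (Fin n))) +
          u (x - ε • (σ : EuclideanSpace ℝ (Fin n)))|
        ≤ |u (x + ε • (σ : EuclideanSpace ℝ (Fin n)))| +
          |u (x - ε • (σ : EuclideanSpace ℝ (Fin n)))| := abs_add_le _ _
      _ ≤ M + M := add_le_add (hM _) (hM _)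
      _ = M * 2 := by ring
  have bdd : ∀ x : EuclideanSpace ℝ (Fin n), BddAbove (range fun σ :
      sphere (0 : EuclideanSpace ℝ (Fin n)) 1 =>
      (u (x + ε • (σ : EuclideanSpace ℝ (Fin n))) +
       u (x - ε • (σ : EuclideanSpace ℝ (Fin n)))) / 2) := by
    intro x
    refine ⟨M, ?_⟩
    rintro y ⟨σ, rfl⟩
    exact (abs_le.mp (hfb x σ)).2
  have hS_bound : ∀ x, |S x| ≤ M := by
    intro x
    rw [abs_le]
    constructor
    · obtain σ₀ := Classical.arbitrary (α := sphere (0 : EuclideanSpace ℝ (Fin n)) 1)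
      exact le_trans (abs_le.mp (hfb x σ₀)).1 (le_ciSup (bdd x) σ₀)
    · exact ciSup_le fun σ => (abs_le.mp (hfb x σ)).2
  set cε : ℝ := (volume (ball (0 : EuclideanSpace ℝ (Fin n)) ε)).toReal with hcε_def
  have hcε_pos : 0 < cε :=
    ENNReal.toReal_pos (measure_ball_pos volume 0 hε).ne' measure_ball_lt_top.ne
  have hrep : ∀ x : EuclideanSpace ℝ (Fin n),
      (⨍ y in ball x ε, u y) = cε⁻¹ * ∫ y in ball x ε, u y := by
    intro x
    rw [setAverage_eq, measureReal_def, Measure.addHaar_ball_center, smul_eq_mul, hcε_def]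
  have havg : ∀ x : EuclideanSpace ℝ (Fin n), |⨍ y in ball x ε, u y| ≤ M := by
    intro x
    rw [hrep x, abs_mul, abs_of_nonneg (inv_nonneg.mpr hcε_pos.le)]
    have h1 : |∫ y in ball x ε, u y| ≤ M * cε := by
      have := aux_setint_bound hM hmeas (s := ball x ε) measure_ball_lt_top
      rwa [Measure.addHaar_ball_center, ← hcε_def] at this
    calc cε⁻¹ * |∫ y in ball x ε, u y| ≤ cε⁻¹ * (M * cε) := by
          exact mul_le_mul_of_nonneg_left h1 (inv_nonneg.mpr hcε_pos.le)
      _ = M := by field_simp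
  constructor
  · refine ⟨((n : ℝ) + 2) / (p + n) * M + (p - 2) / (p + n) * M, fun x => ?_⟩
    calc |(((n : ℝ) + 2) / (p + n)) * (⨍ y in ball x ε, u y) +
          ((p - 2) / (p + n)) * S x|
        ≤ |(((n : ℝ) + 2) / (p + n)) * (⨍ y in ball x ε, u y)| +
          |((p - 2) / (p + n)) * S x| := abs_add_le _ _
      _ = (((n : ℝ) + 2) / (p + n)) * |⨍ y in ball x ε, u y| +
          ((p - 2) / (p + n)) * |S x| := by
            rw [abs_mul, abs_mul, abs_of_nonneg hβ, abs_of_nonneg hα]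
      _ ≤ ((n : ℝ) + 2) / (p + n) * M + (p - 2) / (p + n) * M :=
            add_le_add (mul_le_mul_of_nonneg_left (havg x) hβ)
              (mul_le_mul_of_nonneg_left (hS_bound x) hα)
  · have hg : Continuous (fun x : EuclideanSpace ℝ (Fin n) => ⨍ y in ball x ε, u y) := by
      have h1 := aux_ball_integral_continuous hn hε hM hmeas
      have h2 : Continuous (fun x : EuclideanSpace ℝ (Fin n) =>
          cε⁻¹ * ∫ y in ball x ε, u y) := continuous_const.mul h1
      exact h2.congr fun x => (hrep x).symm
    have hlscS : LowerSemicontinuous S := by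
      refine lowerSemicontinuous_ciSup bdd fun σ => ?_
      have l1 : LowerSemicontinuous fun x : EuclideanSpace ℝ (Fin n) =>
          u (x + ε • (σ : EuclideanSpace ℝ (Fin n))) :=
        aux_lsc_comp hlsc (continuous_id.add continuous_const)
      have l2 : LowerSemicontinuous fun x : EuclideanSpace ℝ (Fin n) =>
          u (x - ε • (σ : EuclideanSpace ℝ (Fin n))) :=
        aux_lsc_comp hlsc (continuous_id.sub continuous_const)
      have l3 := aux_lsc_const_mul (c := (2:ℝ)⁻¹) (by norm_num) (l1.add l2)
      have heq : (fun x : EuclideanSpace ℝ (Fin n) =>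
          (u (x + ε • (σ : EuclideanSpace ℝ (Fin n))) +
           u (x - ε • (σ : EuclideanSpace ℝ (Fin n)))) / 2) =
          fun x : EuclideanSpace ℝ (Fin n) =>
          (2:ℝ)⁻¹ * (u (x + ε • (σ : EuclideanSpace ℝ (Fin n))) +
           u (x - ε • (σ : EuclideanSpace ℝ (Fin n)))) := by
        funext x; ring
      rw [heq]
      exact l3
    exact ((continuous_const.mul hg).lowerSemicontinuous).add (aux_lsc_const_mul hα hlscS)
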